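/- Fix q > 0, let Σ_n be a random permutation of [n] from the Mallows(q) distribution, let m ≥ 1 with n ≥ 2m, and let τ_m = 12⋯m be the increasing pattern. For a block α = {i, …, i+m−1} of m consecutive indices, let X_α be the indicator that red(Σ_{n|α}) = τ_m. Then E X_α = 1/I_m(q) for every such block α; if α and β are two blocks of m consecutive indices with no common element, then E[X_α X_β] = 1/I_m(q)²; and if α and β are two blocks of m consecutive indices sharing exactly s elements, 1 ≤ s ≤ m−1, then E[X_α X_β] = 1/I_{2m−s}(q). -/

import Mathlib

open scoped Classical
open Filter

noncomputable section

/-- `τ` occurs in `σ` at the strictly increasing positions given by `f`: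
`f` is strictly increasing and `σ ∘ f` is order-isomorphic to `τ`. -/
def OccursAt {m n : ℕ} (τ : Equiv.Perm (Fin m)) (σ : Equiv.Perm (Fin n))
    (f : Fin m → Fin n) : Prop :=
  StrictMono f ∧ ∀ k l, σ (f k) < σ (f l) ↔ τ k < τ l

/-- `τ` occurs in `σ` at the set of positions `α` (listed in increasing order). -/
def OccursOn {m n : ℕ} (τ : Equiv.Perm (Fin m)) (σ : Equiv.Perm (Fin n))
    (α : Finset (Fin n)) : Prop :=
  ∃ f : Fin m → Fin n, StrictMono f ∧ Finset.univ.image f = α ∧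
    ∀ k l, σ (f k) < σ (f l) ↔ τ k < τ l

/-- `τ` occurs in `σ` at the consecutive (0-indexed) positions `i, i+1, …, i+m-1`. -/
def OccursConsec {m n : ℕ} (τ : Equiv.Perm (Fin m)) (σ : Equiv.Perm (Fin n)) (i : ℕ) : Prop :=
  ∃ h : i + m ≤ n, ∀ k l : Fin m,
    σ ⟨i + k, by have := k.isLt; omega⟩ < σ ⟨i + l, by have := l.isLt; omega⟩ ↔ τ k < τ l

/-- The overlap count `L_s(τ)`: the number of permutations of `[2m-s]` containing
two occurrences of `τ` at index sets sharing exactly `s` elements. -/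
def overlapCount {m : ℕ} (τ : Equiv.Perm (Fin m)) (s : ℕ) : ℕ :=
  Set.ncard {ρ : Equiv.Perm (Fin (2 * m - s)) |
    ∃ α β : Finset (Fin (2 * m - s)), α.card = m ∧ β.card = m ∧ (α ∩ β).card = s ∧
      OccursOn τ ρ α ∧ OccursOn τ ρ β}

/-- The sequential overlap count `L̄_s(τ)`: the number of permutations of `[2m-s]` with
occurrences of `τ` at positions `(1,…,m)` and `(m-s+1,…,2m-s)`. -/
def seqOverlapCount {m : ℕ} (τ : Equiv.Perm (Fin m)) (s : ℕ) : ℕ :=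
  Set.ncard {ρ : Equiv.Perm (Fin (2 * m - s)) |
    OccursConsec τ ρ 0 ∧ OccursConsec τ ρ (m - s)}

/-- The number of inversions of a permutation. -/
def invCount {n : ℕ} (σ : Equiv.Perm (Fin n)) : ℕ :=
  (Finset.univ.filter fun p : Fin n × Fin n => p.1 < p.2 ∧ σ p.2 < σ p.1).card

/-- The inversion polynomial `I_n(q) = ∏_{j=1}^n (1 + q + ⋯ + q^{j-1})`. -/
def invPoly (n : ℕ) (q : ℝ) : ℝ :=
  ∏ j ∈ Finset.range n, ∑ i ∈ Finset.range (j + 1), q ^ i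

/-- Probability of the event `E` under the uniform distribution on `S_n`. -/
def unifProb {n : ℕ} (E : Set (Equiv.Perm (Fin n))) : ℝ :=
  (E.ncard : ℝ) / (n.factorial : ℝ)

/-- Probability of the event `E` under the Mallows(q) distribution on `S_n`. -/
def mallowsProb {n : ℕ} (q : ℝ) (E : Set (Equiv.Perm (Fin n))) : ℝ :=
  (∑ σ ∈ Finset.univ.filter (· ∈ E), q ^ invCount σ) / invPoly n q

/-- Expectation of `X` under the uniform distribution on `S_n`. -/
def unifExp {n : ℕ} (X : Equiv.Perm (Fin n) → ℝ) : ℝ :=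
  (∑ σ : Equiv.Perm (Fin n), X σ) / (n.factorial : ℝ)

/-- Expectation of `X` under the Mallows(q) distribution on `S_n`. -/
def mallowsExp {n : ℕ} (q : ℝ) (X : Equiv.Perm (Fin n) → ℝ) : ℝ :=
  (∑ σ : Equiv.Perm (Fin n), X σ * q ^ invCount σ) / invPoly n q

/-- The Poisson(lam) probability mass function. -/
def poissonPMF (lam : ℝ) (k : ℕ) : ℝ :=
  Real.exp (-lam) * lam ^ k / (k.factorial : ℝ)

/-- Total variation distance between the law of the ℕ-valued statistic `W` of a uniformly
random permutation of `[n]` and the Poisson(lam) distribution. -/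
def dTVNatUnif {n : ℕ} (W : Equiv.Perm (Fin n) → ℕ) (lam : ℝ) : ℝ :=
  (1 / 2) * ∑' k : ℕ, |unifProb {σ | W σ = k} - poissonPMF lam k|

/-- Total variation distance between the law of the ℕ-valued statistic `W` of a Mallows(q)
random permutation of `[n]` and the Poisson(lam) distribution. -/
def dTVNatMallows {n : ℕ} (q : ℝ) (W : Equiv.Perm (Fin n) → ℕ) (lam : ℝ) : ℝ :=
  (1 / 2) * ∑' k : ℕ, |mallowsProb q {σ | W σ = k} - poissonPMF lam k|

/-- Total variation distance between the joint law of the indicator family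
`(X_α)_{α ∈ I}` of a uniformly random permutation of `[n]` and the joint law of
independent Bernoulli random variables with marginals `p`. -/
def dTVFamUnif {n : ℕ} {I : Type*} [Fintype I] [DecidableEq I]
    (X : Equiv.Perm (Fin n) → I → Prop) (p : I → ℝ) : ℝ :=
  (1 / 2) * ∑ x : I → Bool,
    |unifProb {σ | ∀ α, X σ α ↔ x α = true} - ∏ α, (if x α then p α else 1 - p α)|

/-- Total variation distance between the joint law of the indicator family
`(X_α)_{α ∈ I}` of a Mallows(q) random permutation of `[n]` and the joint law of
independent Bernoulli random variables with marginals `p`. -/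
def dTVFamMallows {n : ℕ} (q : ℝ) {I : Type*} [Fintype I] [DecidableEq I]
    (X : Equiv.Perm (Fin n) → I → Prop) (p : I → ℝ) : ℝ :=
  (1 / 2) * ∑ x : I → Bool,
    |mallowsProb q {σ | ∀ α, X σ α ↔ x α = true} - ∏ α, (if x α then p α else 1 - p α)|


def insertPerm {n : ℕ} (p : Fin (n+1)) (e : Equiv.Perm (Fin n)) : Equiv.Perm (Fin (n+1)) :=
  (finSuccEquiv n).trans ((e.optionCongr).trans (finSuccEquiv' p).symm)

@[simp] lemma insertPerm_zero {n : ℕ} (p : Fin (n+1)) (e : Equiv.Perm (Fin n)) :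
    insertPerm p e 0 = p := by simp [insertPerm]

@[simp] lemma insertPerm_succ {n : ℕ} (p : Fin (n+1)) (e : Equiv.Perm (Fin n)) (i : Fin n) :
    insertPerm p e i.succ = p.succAbove (e i) := by simp [insertPerm]

lemma insertPerm_injective {n : ℕ} :
    Function.Injective (fun pe : Fin (n+1) × Equiv.Perm (Fin n) => insertPerm pe.1 pe.2) := by
  rintro ⟨p₁, e₁⟩ ⟨p₂, e₂⟩ h
  simp only at h
  have hp : p₁ = p₂ := by
    have := congrArg (fun f : Equiv.Perm (Fin (n+1)) => f 0) h
    simpa using this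
  subst hp
  have he : e₁ = e₂ := by
    ext i
    have := congrArg (fun f : Equiv.Perm (Fin (n+1)) => f i.succ) h
    simp only [insertPerm_succ] at this
    exact congrArg Fin.val (Fin.succAbove_right_injective this)
  simp [he]

lemma card_inv_first_zero {n : ℕ} (σ : Equiv.Perm (Fin (n+1))) :
    ((Finset.univ.filter fun pr : Fin (n+1) × Fin (n+1) =>
      (pr.1 < pr.2 ∧ σ pr.2 < σ pr.1) ∧ pr.1 = 0)).card = (σ 0 : ℕ) := by
  have key : ((Finset.univ.filter fun pr : Fin (n+1) × Fin (n+1) =>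
      (pr.1 < pr.2 ∧ σ pr.2 < σ pr.1) ∧ pr.1 = 0)).card = (Finset.range (σ 0 : ℕ)).card := by
    apply Finset.card_nbij' (fun pr => (σ pr.2 : ℕ))
      (fun a => (0, σ.symm ⟨min a n, by omega⟩))
    · rintro ⟨x, y⟩ h
      simp only [Finset.mem_coe, Finset.mem_filter, Finset.mem_univ, true_and] at h ⊢
      obtain ⟨⟨hxy, hinv⟩, hx0⟩ := h
      subst hx0
      simpa [Finset.mem_range] using (Fin.lt_def.mp hinv)
    · intro a ha
      simp only [Finset.mem_coe, Finset.mem_range] at ha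
      have han : min a n = a := by have := (σ 0).isLt; omega
      simp only [Finset.mem_coe, Finset.mem_filter, Finset.mem_univ, true_and]
      have hlt : (⟨min a n, by omega⟩ : Fin (n+1)) < σ 0 := by
        simp [Fin.lt_def, han, ha]
      refine ⟨⟨?_, by simpa using hlt⟩, trivial⟩
      rw [Fin.pos_iff_ne_zero]
      intro h0
      have h1 : σ ((σ.symm) ⟨min a n, by omega⟩) = σ 0 := by rw [h0]
      rw [Equiv.apply_symm_apply] at h1
      have h2 := congrArg Fin.val h1
      have h3 := Fin.lt_def.mp hlt
      simp only at h2 h3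
      omega
    · rintro ⟨x, y⟩ h
      simp only [Finset.mem_coe, Finset.mem_filter, Finset.mem_univ, true_and] at h
      obtain ⟨⟨hxy, hinv⟩, hx0⟩ := h
      subst hx0
      have : min (σ y : ℕ) n = (σ y : ℕ) := by
        have h2 := Fin.lt_def.mp hinv
        have := (σ 0).isLt; omega
      simp [this]
    · intro a ha
      simp only [Finset.mem_coe, Finset.mem_range] at ha
      have han : min a n = a := by have := (σ 0).isLt; omega
      simp [han]
  simpa using key

lemma card_inv_first_ne_zero {n : ℕ} (p : Fin (n+1)) (e : Equiv.Perm (Fin n)) :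
    ((Finset.univ.filter fun pr : Fin (n+1) × Fin (n+1) =>
      (pr.1 < pr.2 ∧ insertPerm p e pr.2 < insertPerm p e pr.1) ∧ ¬ pr.1 = 0)).card
      = invCount e := by
  rw [invCount]
  symm
  apply Finset.card_bij (fun pr _ => (pr.1.succ, pr.2.succ))
  · rintro ⟨x, y⟩ h
    simp only [Finset.mem_filter, Finset.mem_univ, true_and] at h ⊢
    obtain ⟨hxy, hinv⟩ := h
    refine ⟨⟨by simpa [Fin.succ_lt_succ_iff] using hxy, ?_⟩, Fin.succ_ne_zero x⟩
    simpa [Fin.succAbove_lt_succAbove_iff] using hinv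
  · rintro ⟨x₁, y₁⟩ h₁ ⟨x₂, y₂⟩ h₂ heq
    simp only [Prod.mk.injEq] at heq ⊢
    exact ⟨Fin.succ_injective _ heq.1, Fin.succ_injective _ heq.2⟩
  · rintro ⟨x, y⟩ h
    simp only [Finset.mem_filter, Finset.mem_univ, true_and] at h
    obtain ⟨⟨hxy, hinv⟩, hx0⟩ := h
    have hy0 : y ≠ 0 := Fin.pos_iff_ne_zero.mp ((x.zero_le).trans_lt hxy)
    obtain ⟨x', hx'⟩ := Fin.exists_succ_eq.mpr hx0
    obtain ⟨y', hy'⟩ := Fin.exists_succ_eq.mpr hy0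
    refine ⟨(x', y'), ?_, by simp [hx', hy']⟩
    simp only [Finset.mem_filter, Finset.mem_univ, true_and]
    subst hx' hy'
    constructor
    · exact Fin.succ_lt_succ_iff.mp hxy
    · simp only [insertPerm_succ] at hinv
      exact Fin.succAbove_lt_succAbove_iff.mp hinv

lemma invCount_insertPerm {n : ℕ} (p : Fin (n+1)) (e : Equiv.Perm (Fin n)) :
    invCount (insertPerm p e) = (p : ℕ) + invCount e := by
  have hsplit := Finset.card_filter_add_card_filter_not
    (s := (Finset.univ.filter fun pr : Fin (n+1) × Fin (n+1) =>
      pr.1 < pr.2 ∧ insertPerm p e pr.2 < insertPerm p e pr.1)) (p := fun pr => pr.1 = 0)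
  rw [Finset.filter_filter, Finset.filter_filter] at hsplit
  rw [invCount, ← hsplit]
  have h1 := card_inv_first_zero (insertPerm p e)
  simp only [insertPerm_zero] at h1
  rw [h1, card_inv_first_ne_zero]

lemma permSum_eq_invPoly (q : ℝ) : ∀ n, (∑ σ : Equiv.Perm (Fin n), q ^ invCount σ) = invPoly n q := by
  intro n
  induction n with
  | zero =>
    rw [invPoly]
    simp only [Finset.range_zero, Finset.prod_empty]
    rw [Finset.sum_eq_single_of_mem (1 : Equiv.Perm (Fin 0)) (Finset.mem_univ _)
      (fun b _ _ => absurd (Subsingleton.elim b 1) (by tauto))]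
    have : invCount (1 : Equiv.Perm (Fin 0)) = 0 := by
      rw [invCount]
      simp [Finset.filter_eq_empty_iff]
    simp [this]
  | succ n ih =>
    have hbij : Function.Bijective
        (fun pe : Fin (n+1) × Equiv.Perm (Fin n) => insertPerm pe.1 pe.2) := by
      rw [Fintype.bijective_iff_injective_and_card]
      refine ⟨insertPerm_injective, ?_⟩
      simp [Fintype.card_perm, Nat.factorial_succ]
    rw [← Fintype.sum_bijective _ hbij
      (fun pe => q ^ ((pe.1 : ℕ) + invCount pe.2)) (fun σ => q ^ invCount σ)
      (fun pe => by simp only [invCount_insertPerm])]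
    rw [Fintype.sum_prod_type]
    simp only [pow_add]
    rw [← Finset.sum_mul_sum]
    rw [ih, invPoly, invPoly, Finset.prod_range_succ, mul_comm]
    congr 1
    exact Fin.sum_univ_eq_sum_range (fun i => q ^ i) (n+1)


def blockEmb (i m n : ℕ) (h : i + m ≤ n) : Fin m ↪ Fin n :=
  ⟨fun k => ⟨i + k, by have := k.isLt; omega⟩, by
    intro a b hab
    have := congrArg Fin.val hab
    simp only at this
    exact Fin.ext (by omega)⟩

def blockPerm {i m n : ℕ} (h : i + m ≤ n) (π : Equiv.Perm (Fin m)) : Equiv.Perm (Fin n) :=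
  π.viaEmbedding (blockEmb i m n h)

lemma blockPerm_apply_block {i m n : ℕ} (h : i + m ≤ n) (π : Equiv.Perm (Fin m))
    (k : Fin m) (hk : i + (k : ℕ) < n) :
    blockPerm h π ⟨i + k, hk⟩ = ⟨i + (π k : ℕ), by have := (π k).isLt; omega⟩ := by
  have := Equiv.Perm.viaEmbedding_apply π (blockEmb i m n h) k
  exact this

lemma blockPerm_apply_out {i m n : ℕ} (h : i + m ≤ n) (π : Equiv.Perm (Fin m))
    (x : Fin n) (hx : (x : ℕ) < i ∨ i + m ≤ (x : ℕ)) :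
    blockPerm h π x = x := by
  apply Equiv.Perm.viaEmbedding_apply_of_notMem
  rintro ⟨k, hk⟩
  have : (x : ℕ) = i + k := by rw [← hk]; rfl
  have := k.isLt
  omega

lemma blockPerm_mem_iff {i m n : ℕ} (h : i + m ≤ n) (π : Equiv.Perm (Fin m)) (x : Fin n) :
    (i ≤ (blockPerm h π x : ℕ) ∧ (blockPerm h π x : ℕ) < i + m) ↔
      (i ≤ (x : ℕ) ∧ (x : ℕ) < i + m) := by
  by_cases hx : i ≤ (x : ℕ) ∧ (x : ℕ) < i + m
  · have hk : x = ⟨i + ((x : ℕ) - i), by omega⟩ := Fin.ext (by simp; omega)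
    rw [hk]
    rw [blockPerm_apply_block h π ⟨(x : ℕ) - i, by omega⟩ (by simp; omega)]
    have := (π ⟨(x : ℕ) - i, by omega⟩).isLt
    simp only
    constructor <;> intro <;> constructor <;> omega
  · rw [blockPerm_apply_out h π x (by omega)]

lemma blockPerm_inv {i m n : ℕ} (h : i + m ≤ n) (π : Equiv.Perm (Fin m)) :
    (blockPerm h π)⁻¹ = blockPerm h π⁻¹ := by
  rw [eq_comm, eq_inv_iff_mul_eq_one]
  ext x
  simp only [Equiv.Perm.mul_apply, Equiv.Perm.one_apply]
  by_cases hx : i ≤ (x : ℕ) ∧ (x : ℕ) < i + m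
  · have hk : x = ⟨i + ((x : ℕ) - i), by omega⟩ := Fin.ext (by simp; omega)
    rw [hk]
    rw [blockPerm_apply_block h π ⟨(x : ℕ) - i, by omega⟩ (by simp; omega)]
    rw [blockPerm_apply_block h π⁻¹ _ (by have := (π ⟨(x : ℕ) - i, by omega⟩).isLt; omega)]
    simp
  · rw [blockPerm_apply_out h π x (by omega), blockPerm_apply_out h π⁻¹ x (by omega)]

def Inc {n : ℕ} (m i : ℕ) (σ : Equiv.Perm (Fin n)) : Prop :=
  ∀ k l : ℕ, ∀ hk : i + k < n, ∀ hl : i + l < n, k < m → l < m →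
    (σ ⟨i + k, hk⟩ < σ ⟨i + l, hl⟩ ↔ k < l)

lemma blockPerm_lt {i m n : ℕ} (h : i + m ≤ n) (π : Equiv.Perm (Fin m)) (x y : Fin n)
    (hxy : x < y)
    (hP : ¬((i ≤ (x : ℕ) ∧ (x : ℕ) < i + m) ∧ (i ≤ (y : ℕ) ∧ (y : ℕ) < i + m))) :
    blockPerm h π x < blockPerm h π y := by
  have hv := Fin.lt_def.mp hxy
  rw [Fin.lt_def]
  by_cases hx : i ≤ (x : ℕ) ∧ (x : ℕ) < i + m
  · have hy : i + m ≤ (y : ℕ) := by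
      by_contra hc
      exact hP ⟨hx, by omega, by omega⟩
    rw [blockPerm_apply_out h π y (by omega)]
    have hk : x = ⟨i + ((x : ℕ) - i), by omega⟩ := Fin.ext (by simp; omega)
    rw [hk, blockPerm_apply_block h π ⟨(x : ℕ) - i, by omega⟩ (by simp; omega)]
    have := (π ⟨(x : ℕ) - i, by omega⟩).isLt
    simp only
    omega
  · by_cases hy : i ≤ (y : ℕ) ∧ (y : ℕ) < i + m
    · have hxi : (x : ℕ) < i := by omega
      rw [blockPerm_apply_out h π x (by omega)]
      have hk : y = ⟨i + ((y : ℕ) - i), by omega⟩ := Fin.ext (by simp; omega)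
      rw [hk, blockPerm_apply_block h π ⟨(y : ℕ) - i, by omega⟩ (by simp; omega)]
      simp only
      omega
    · rw [blockPerm_apply_out h π x (by omega), blockPerm_apply_out h π y (by omega)]
      exact hv

lemma val_sub_add {n i m : ℕ} (x : Fin n) (hx1 : i ≤ (x : ℕ)) (hx2 : (x : ℕ) < i + m)
    (pf : i + ((x : ℕ) - i) < n) : (⟨i + ((x : ℕ) - i), pf⟩ : Fin n) = x :=
  Fin.ext (by simp; omega)

lemma mul_block_lt_iff {i m n : ℕ} (h : i + m ≤ n) (σ : Equiv.Perm (Fin n))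
    (hσ : Inc m i σ) (π : Equiv.Perm (Fin m)) (k l : Fin m)
    (hk : i + (k : ℕ) < n) (hl : i + (l : ℕ) < n) :
    (σ * blockPerm h π) ⟨i + (k : ℕ), hk⟩ < (σ * blockPerm h π) ⟨i + (l : ℕ), hl⟩ ↔ π k < π l := by
  simp only [Equiv.Perm.mul_apply]
  rw [blockPerm_apply_block h π k hk, blockPerm_apply_block h π l hl]
  rw [hσ (π k : ℕ) (π l : ℕ) (by have := (π k).isLt; omega) (by have := (π l).isLt; omega)
    (π k).isLt (π l).isLt]
  exact Fin.lt_def.symm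

lemma invCount_mul_blockPerm {i m n : ℕ} (h : i + m ≤ n) (σ : Equiv.Perm (Fin n))
    (hσ : Inc m i σ) (π : Equiv.Perm (Fin m)) :
    invCount (σ * blockPerm h π) = invCount σ + invCount π := by
  set ρ := blockPerm h π with hρ
  set P : Fin n × Fin n → Prop := fun pr =>
    (i ≤ (pr.1 : ℕ) ∧ (pr.1 : ℕ) < i + m) ∧ (i ≤ (pr.2 : ℕ) ∧ (pr.2 : ℕ) < i + m) with hP
  have hsplit1 := Finset.card_filter_add_card_filter_not
    (s := Finset.univ.filter fun pr : Fin n × Fin n =>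
      pr.1 < pr.2 ∧ (σ * ρ) pr.2 < (σ * ρ) pr.1) (p := P)
  have hsplit2 := Finset.card_filter_add_card_filter_not
    (s := Finset.univ.filter fun pr : Fin n × Fin n =>
      pr.1 < pr.2 ∧ σ pr.2 < σ pr.1) (p := P)
  rw [Finset.filter_filter, Finset.filter_filter] at hsplit1 hsplit2
  have claim0 : (Finset.univ.filter fun pr : Fin n × Fin n =>
      (pr.1 < pr.2 ∧ σ pr.2 < σ pr.1) ∧ P pr).card = 0 := by
    rw [Finset.card_eq_zero, Finset.filter_eq_empty_iff]
    rintro ⟨x, y⟩ _ hmem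
    dsimp only [hP] at hmem
    obtain ⟨⟨hxy, hinv⟩, ⟨hx1, hx2⟩, ⟨hy1, hy2⟩⟩ := hmem
    try dsimp only at hxy hinv hx1 hx2 hy1 hy2
    have key := hσ ((y : ℕ) - i) ((x : ℕ) - i) (by omega) (by omega) (by omega) (by omega)
    rw [val_sub_add y hy1 hy2, val_sub_add x hx1 hx2] at key
    have h1 := key.mp hinv
    have h2 := Fin.lt_def.mp hxy
    omega
  have claim1 : (Finset.univ.filter fun pr : Fin n × Fin n =>
      (pr.1 < pr.2 ∧ (σ * ρ) pr.2 < (σ * ρ) pr.1) ∧ P pr).card = invCount π := by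
    rw [invCount]
    symm
    apply Finset.card_bij (fun kl _ =>
      ((⟨i + (kl.1 : ℕ), by have := kl.1.isLt; omega⟩ : Fin n),
       (⟨i + (kl.2 : ℕ), by have := kl.2.isLt; omega⟩ : Fin n)))
    · rintro ⟨k, l⟩ hkl
      simp only [Finset.mem_filter, Finset.mem_univ, true_and] at hkl
      obtain ⟨hkl1, hkl2⟩ := hkl
      simp only [Finset.mem_filter, Finset.mem_univ, true_and]
      refine ⟨⟨?_, ?_⟩, ⟨by dsimp only; omega, by dsimp only; have := k.isLt; omega⟩,
        ⟨by dsimp only; omega, by dsimp only; have := l.isLt; omega⟩⟩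
      · rw [Fin.mk_lt_mk]; have := Fin.lt_def.mp hkl1; omega
      · rw [hρ]
        exact (mul_block_lt_iff h σ hσ π l k (by have := l.isLt; omega)
          (by have := k.isLt; omega)).mpr hkl2
    · rintro ⟨k₁, l₁⟩ h₁ ⟨k₂, l₂⟩ h₂ heq
      simp only [Prod.mk.injEq, Fin.mk.injEq] at heq ⊢
      exact ⟨Fin.ext (by omega), Fin.ext (by omega)⟩
    · rintro ⟨x, y⟩ hxy
      simp only [Finset.mem_filter, Finset.mem_univ, true_and] at hxy
      try dsimp only [hP] at hxy
      obtain ⟨⟨hlt, hinv⟩, ⟨hx1, hx2⟩, ⟨hy1, hy2⟩⟩ := hxy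
      try dsimp only at hlt hinv hx1 hx2 hy1 hy2
      refine ⟨(⟨(x : ℕ) - i, by omega⟩, ⟨(y : ℕ) - i, by omega⟩), ?_, ?_⟩
      · simp only [Finset.mem_filter, Finset.mem_univ, true_and]
        constructor
        · rw [Fin.mk_lt_mk]; have := Fin.lt_def.mp hlt; omega
        · rw [← val_sub_add x hx1 hx2 (by omega), ← val_sub_add y hy1 hy2 (by omega)] at hinv
          rw [hρ] at hinv
          exact (mul_block_lt_iff h σ hσ π ⟨(y : ℕ) - i, by omega⟩ ⟨(x : ℕ) - i, by omega⟩
            (by omega) (by omega)).mp hinv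
      · simp only [Prod.mk.injEq]
        exact ⟨val_sub_add x hx1 hx2 _, val_sub_add y hy1 hy2 _⟩
  have claim2 : (Finset.univ.filter fun pr : Fin n × Fin n =>
      (pr.1 < pr.2 ∧ (σ * ρ) pr.2 < (σ * ρ) pr.1) ∧ ¬ P pr).card
      = (Finset.univ.filter fun pr : Fin n × Fin n =>
      (pr.1 < pr.2 ∧ σ pr.2 < σ pr.1) ∧ ¬ P pr).card := by
    apply Finset.card_nbij' (fun pr => (ρ pr.1, ρ pr.2)) (fun pr => (ρ⁻¹ pr.1, ρ⁻¹ pr.2))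
    · rintro ⟨x, y⟩ hxy
      simp only [Finset.mem_coe, Finset.mem_filter, Finset.mem_univ, true_and, hP] at hxy ⊢
      try dsimp only at hxy ⊢
      obtain ⟨⟨hlt, hinv⟩, hnP⟩ := hxy
      refine ⟨⟨blockPerm_lt h π x y hlt hnP, hinv⟩, ?_⟩
      rw [blockPerm_mem_iff h π x, blockPerm_mem_iff h π y]
      exact hnP
    · rintro ⟨x, y⟩ hxy
      simp only [Finset.mem_coe, Finset.mem_filter, Finset.mem_univ, true_and, hP] at hxy ⊢
      try dsimp only at hxy ⊢
      obtain ⟨⟨hlt, hinv⟩, hnP⟩ := hxy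
      rw [hρ, blockPerm_inv h π]
      refine ⟨⟨blockPerm_lt h π⁻¹ x y hlt hnP, ?_⟩, ?_⟩
      · simp only [Equiv.Perm.mul_apply, hρ]
        rw [← blockPerm_inv h π]
        simp only [← Equiv.Perm.mul_apply, mul_inv_cancel, Equiv.Perm.one_apply]
        exact hinv
      · rw [blockPerm_mem_iff h π⁻¹ x, blockPerm_mem_iff h π⁻¹ y]
        exact hnP
    · rintro ⟨x, y⟩ _
      simp
    · rintro ⟨x, y⟩ _
      simp
  rw [invCount, invCount, ← hsplit1, ← hsplit2, claim0, claim1, claim2]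
  omega

lemma blockPerm_apply_block' {i m n : ℕ} (h : i + m ≤ n) (π : Equiv.Perm (Fin m))
    (k : ℕ) (hkm : k < m) (hk : i + k < n) :
    blockPerm h π ⟨i + k, hk⟩
      = ⟨i + (π ⟨k, hkm⟩ : ℕ), by have := (π ⟨k, hkm⟩).isLt; omega⟩ :=
  blockPerm_apply_block h π ⟨k, hkm⟩ hk

lemma exists_inc_decomp {i m n : ℕ} (h : i + m ≤ n) (σ : Equiv.Perm (Fin n)) :
    ∃ π : Equiv.Perm (Fin m), Inc m i (σ * (blockPerm h π)⁻¹) := by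
  set g : Fin m → Fin n := fun k => σ ⟨i + (k : ℕ), by have := k.isLt; omega⟩ with hg
  have ginj : Function.Injective g := by
    intro a b hab
    have h2 := congrArg Fin.val (σ.injective hab)
    simp only at h2
    exact Fin.ext (by omega)
  have hs : (Finset.univ.image g).card = m := by
    rw [Finset.card_image_of_injective _ ginj, Finset.card_univ, Fintype.card_fin]
  set oi := (Finset.univ.image g).orderIsoOfFin hs with hoi
  set r : Fin m → Fin m :=
    fun k => oi.symm ⟨g k, Finset.mem_image_of_mem g (Finset.mem_univ k)⟩ with hr
  have rinj : Function.Injective r := by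
    intro a b hab
    apply ginj
    have := oi.symm.injective hab
    exact Subtype.ext_iff.mp this
  have rbij : Function.Bijective r := (Fintype.bijective_iff_injective_and_card r).mpr ⟨rinj, rfl⟩
  set π : Equiv.Perm (Fin m) := Equiv.ofBijective r rbij with hπdef
  have hπ : ∀ a b : Fin m, g a < g b ↔ π a < π b := by
    intro a b
    have : π a = r a := rfl
    have : π b = r b := rfl
    show g a < g b ↔ r a < r b
    rw [hr]
    simp only
    rw [OrderIso.lt_iff_lt]
    exact Iff.symm Subtype.mk_lt_mk
  refine ⟨π, ?_⟩
  intro k l hk hl hkm hlm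
  rw [blockPerm_inv h π]
  simp only [Equiv.Perm.mul_apply]
  rw [blockPerm_apply_block' h π⁻¹ k hkm hk, blockPerm_apply_block' h π⁻¹ l hlm hl]
  show g (π⁻¹ ⟨k, hkm⟩) < g (π⁻¹ ⟨l, hlm⟩) ↔ k < l
  rw [hπ (π⁻¹ ⟨k, hkm⟩) (π⁻¹ ⟨l, hlm⟩)]; simp only [← Equiv.Perm.mul_apply, mul_inv_cancel, Equiv.Perm.one_apply]
  exact Fin.mk_lt_mk

lemma decomp_unique {i m n : ℕ} (h : i + m ≤ n) (σ₁ σ₂ : Equiv.Perm (Fin n))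
    (π₁ π₂ : Equiv.Perm (Fin m)) (h₁ : Inc m i σ₁) (h₂ : Inc m i σ₂)
    (heq : σ₁ * blockPerm h π₁ = σ₂ * blockPerm h π₂) : π₁ = π₂ ∧ σ₁ = σ₂ := by
  have hpoint : ∀ k : Fin m,
      σ₁ ⟨i + (π₁ k : ℕ), by have := (π₁ k).isLt; omega⟩
        = σ₂ ⟨i + (π₂ k : ℕ), by have := (π₂ k).isLt; omega⟩ := by
    intro k
    have hc := congrArg (fun f : Equiv.Perm (Fin n) =>
      f ⟨i + (k : ℕ), by have := k.isLt; omega⟩) heq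
    simp only [Equiv.Perm.mul_apply] at hc
    rw [blockPerm_apply_block h π₁ k (by have := k.isLt; omega),
        blockPerm_apply_block h π₂ k (by have := k.isLt; omega)] at hc
    exact hc
  have key : ∀ a : Fin m, σ₁ ⟨i + (a : ℕ), by have := a.isLt; omega⟩
      = σ₂ ⟨i + (π₂ (π₁⁻¹ a) : ℕ), by have := (π₂ (π₁⁻¹ a)).isLt; omega⟩ := by
    intro a
    have e1 : σ₁ ⟨i + (a : ℕ), by have := a.isLt; omega⟩
        = σ₁ ⟨i + (π₁ (π₁⁻¹ a) : ℕ), by have := (π₁ (π₁⁻¹ a)).isLt; omega⟩ :=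
      congrArg σ₁ (Fin.ext (by simp))
    rw [e1, hpoint (π₁⁻¹ a)]
  have hiff : ∀ a b : Fin m, (π₂ (π₁⁻¹ a) < π₂ (π₁⁻¹ b)) ↔ a < b := by
    intro a b
    rw [Fin.lt_def,
      ← h₂ (π₂ (π₁⁻¹ a) : ℕ) (π₂ (π₁⁻¹ b) : ℕ)
        (by have := (π₂ (π₁⁻¹ a)).isLt; omega) (by have := (π₂ (π₁⁻¹ b)).isLt; omega)
        (π₂ (π₁⁻¹ a)).isLt (π₂ (π₁⁻¹ b)).isLt,
      ← key a, ← key b,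
      h₁ (a : ℕ) (b : ℕ) (by have := a.isLt; omega) (by have := b.isLt; omega) a.isLt b.isLt]
    exact Fin.lt_def.symm
  have hf : StrictMono (fun a => π₂ (π₁⁻¹ a)) := fun a b hab => (hiff a b).mpr hab
  have hfsurj : Function.Surjective (fun a => π₂ (π₁⁻¹ a)) := by
    intro c
    exact ⟨π₁ (π₂⁻¹ c), by simp⟩
  have hfid : (fun a => π₂ (π₁⁻¹ a)) = id := by
    apply (StrictMono.range_inj hf strictMono_id).mp
    rw [Set.range_id]
    exact Set.range_eq_univ.mpr hfsurj
  have hππ : π₁ = π₂ := by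
    apply Equiv.ext
    intro x
    have := congrFun hfid (π₁ x)
    simpa using this.symm
  refine ⟨hππ, ?_⟩
  rw [hππ] at heq
  exact mul_right_cancel heq

lemma keyB {i m n : ℕ} (q : ℝ) (h : i + m ≤ n) (F : Equiv.Perm (Fin n) → Prop)
    (hF : ∀ σ (π : Equiv.Perm (Fin m)), F (σ * blockPerm h π) ↔ F σ) :
    (∑ σ ∈ Finset.univ.filter (fun σ => F σ ∧ Inc m i σ), q ^ invCount σ)
      * (∑ π : Equiv.Perm (Fin m), q ^ invCount π)
    = ∑ σ ∈ Finset.univ.filter F, q ^ invCount σ := by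
  rw [Finset.sum_mul_sum]
  rw [← Finset.sum_product']
  refine Finset.sum_bij (fun pr _ => pr.1 * blockPerm h pr.2) ?_ ?_ ?_ ?_
  · rintro ⟨σ', π⟩ hmem
    simp only [Finset.mem_product, Finset.mem_filter, Finset.mem_univ, true_and,
      and_true] at hmem
    simp only [Finset.mem_filter, Finset.mem_univ, true_and]
    exact (hF σ' π).mpr hmem.1
  · rintro ⟨σ₁, π₁⟩ hm₁ ⟨σ₂, π₂⟩ hm₂ heq
    simp only [Finset.mem_product, Finset.mem_filter, Finset.mem_univ, true_and,
      and_true] at hm₁ hm₂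
    dsimp only at heq
    obtain ⟨hp, hs'⟩ := decomp_unique h σ₁ σ₂ π₁ π₂ hm₁.2 hm₂.2 heq
    simp [hs', hp]
  · intro σ hσmem
    simp only [Finset.mem_filter, Finset.mem_univ, true_and] at hσmem
    obtain ⟨π, hπ⟩ := exists_inc_decomp h σ
    refine ⟨(σ * (blockPerm h π)⁻¹, π), ?_, by simp⟩
    simp only [Finset.mem_product, Finset.mem_filter, Finset.mem_univ, true_and, and_true]
    constructor
    · rw [blockPerm_inv h π]
      exact (hF σ π⁻¹).mpr hσmem
    · exact hπ
  · rintro ⟨σ', π⟩ hmem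
    simp only [Finset.mem_product, Finset.mem_filter, Finset.mem_univ, true_and,
      and_true] at hmem
    dsimp only
    rw [invCount_mul_blockPerm h σ' hmem.2 π, pow_add]


lemma invPoly_pos (n : ℕ) (q : ℝ) (hq : 0 < q) : 0 < invPoly n q := by
  rw [invPoly]
  apply Finset.prod_pos
  intro j _
  apply Finset.sum_pos (fun k _ => pow_pos hq k)
  exact Finset.nonempty_range_iff.mpr (Nat.succ_ne_zero j)

lemma occursConsec_iff {m n i : ℕ} (σ : Equiv.Perm (Fin n)) (h : i + m ≤ n) :
    OccursConsec (Equiv.refl (Fin m)) σ i ↔ Inc m i σ := by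
  constructor
  · rintro ⟨h', H⟩
    intro k l hk hl hkm hlm
    have := H ⟨k, hkm⟩ ⟨l, hlm⟩
    simpa using this
  · intro H
    refine ⟨h, fun k l => ?_⟩
    have := H (k : ℕ) (l : ℕ) (by have := k.isLt; omega) (by have := l.isLt; omega) k.isLt l.isLt
    simpa using this

lemma mallowsProb_congr {n : ℕ} (q : ℝ) (E : Set (Equiv.Perm (Fin n)))
    (p : Equiv.Perm (Fin n) → Prop) (h : ∀ σ, σ ∈ E ↔ p σ) :
    mallowsProb q E = (∑ σ ∈ Finset.univ.filter p, q ^ invCount σ) / invPoly n q := by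
  rw [mallowsProb]
  congr 1
  exact Finset.sum_congr (Finset.filter_congr (fun x _ => h x)) (fun _ _ => rfl)

lemma mallows_inc (q : ℝ) (hq : 0 < q) {n m i : ℕ} (h : i + m ≤ n) :
    mallowsProb q {πn : Equiv.Perm (Fin n) | OccursConsec (Equiv.refl (Fin m)) πn i}
      = 1 / invPoly m q := by
  have hkey := keyB q h (fun _ => True) (fun σ π => Iff.rfl)
  simp only [true_and, Finset.filter_true] at hkey
  rw [permSum_eq_invPoly q m, permSum_eq_invPoly q n] at hkey
  rw [mallowsProb_congr q {πn : Equiv.Perm (Fin n) | OccursConsec (Equiv.refl (Fin m)) πn i}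
    (fun σ => Inc m i σ) (fun σ => occursConsec_iff σ h)]
  have h1 : invPoly n q ≠ 0 := ne_of_gt (invPoly_pos n q hq)
  have h2 : invPoly m q ≠ 0 := ne_of_gt (invPoly_pos m q hq)
  rw [div_eq_div_iff h1 h2, one_mul]
  exact hkey

lemma inc_invariant {i i' m n : ℕ} (h : i + m ≤ n) (hdisj : i + m ≤ i' ∨ i' + m ≤ i)
    (σ : Equiv.Perm (Fin n)) (π : Equiv.Perm (Fin m)) :
    Inc m i' (σ * blockPerm h π) ↔ Inc m i' σ := by
  have hfix : ∀ k (hk : i' + k < n), k < m →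
      (σ * blockPerm h π) ⟨i' + k, hk⟩ = σ ⟨i' + k, hk⟩ := by
    intro k hk hkm
    simp only [Equiv.Perm.mul_apply]
    rw [blockPerm_apply_out h π _ (by simp; omega)]
  constructor <;> intro H k l hk hl hkm hlm
  · have := H k l hk hl hkm hlm
    rw [hfix k hk hkm, hfix l hl hlm] at this
    exact this
  · rw [hfix k hk hkm, hfix l hl hlm]
    exact H k l hk hl hkm hlm

lemma mallows_inc2 (q : ℝ) (hq : 0 < q) {n m i i' : ℕ} (h : i + m ≤ n) (h' : i' + m ≤ n)
    (hsep : i + m ≤ i' ∨ i' + m ≤ i) :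
    mallowsProb q {πn : Equiv.Perm (Fin n) |
        OccursConsec (Equiv.refl (Fin m)) πn i ∧ OccursConsec (Equiv.refl (Fin m)) πn i'}
      = 1 / (invPoly m q) ^ 2 := by
  have hkey1 := keyB q h (fun σ => Inc m i' σ) (fun σ π => inc_invariant h hsep σ π)
  beta_reduce at hkey1
  have hkey2 := keyB q h' (fun _ => True) (fun σ π => Iff.rfl)
  simp only [true_and, Finset.filter_true] at hkey2
  rw [permSum_eq_invPoly q m] at hkey1 hkey2
  rw [permSum_eq_invPoly q n] at hkey2
  rw [mallowsProb_congr q {πn : Equiv.Perm (Fin n) |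
      OccursConsec (Equiv.refl (Fin m)) πn i ∧ OccursConsec (Equiv.refl (Fin m)) πn i'}
    (fun σ => Inc m i' σ ∧ Inc m i σ) (fun σ => by
    simp only [Set.mem_setOf_eq, occursConsec_iff σ h, occursConsec_iff σ h']
    exact and_comm)]
  have h1 : invPoly n q ≠ 0 := ne_of_gt (invPoly_pos n q hq)
  have h2 : invPoly m q ≠ 0 := ne_of_gt (invPoly_pos m q hq)
  have h3 : (invPoly m q) ^ 2 ≠ 0 := pow_ne_zero 2 h2
  rw [div_eq_div_iff h1 h3, one_mul, pow_two, ← mul_assoc]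
  have hfin := (congrArg (· * invPoly m q) hkey1).trans hkey2
  convert hfin using 4
  exact Finset.filter_congr_decidable _ _ _

lemma perm_mk_congr {n : ℕ} (σ : Equiv.Perm (Fin n)) {a b : ℕ} (ha : a < n) (hb : b < n)
    (hab : a = b) : σ ⟨a, ha⟩ = σ ⟨b, hb⟩ := by subst hab; rfl

lemma inc_overlap {m s n i : ℕ} (hs1 : 1 ≤ s) (hs2 : s + 1 ≤ m)
    (h2 : i + (m - s) + m ≤ n) (σ : Equiv.Perm (Fin n)) :
    (Inc m i σ ∧ Inc m (i + (m - s)) σ) ↔ Inc (2 * m - s) i σ := by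
  constructor
  · rintro ⟨H1, H2⟩
    have step : ∀ j, j + 1 < 2 * m - s → ∀ (hj : i + j < n) (hj1 : i + (j + 1) < n),
        σ ⟨i + j, hj⟩ < σ ⟨i + (j + 1), hj1⟩ := by
      intro j hjb hj hj1
      by_cases hc : j + 1 < m
      · exact (H1 j (j + 1) hj hj1 (by omega) hc).mpr (by omega)
      · have key := (H2 (j - (m - s)) (j + 1 - (m - s)) (by omega) (by omega)
          (by omega) (by omega)).mpr (by omega)
        rw [perm_mk_congr σ (a := i + (m - s) + (j - (m - s))) (b := i + j) (by omega) hj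
            (by omega),
          perm_mk_congr σ (a := i + (m - s) + (j + 1 - (m - s))) (b := i + (j + 1)) (by omega)
            hj1 (by omega)] at key
        exact key
    have chain : ∀ k l (hk : i + k < n) (hl : i + l < n), l < 2 * m - s → k < l →
        σ ⟨i + k, hk⟩ < σ ⟨i + l, hl⟩ := by
      intro k l
      induction l with
      | zero => omega
      | succ l ih =>
        intro hk hl hlb hkl
        rcases Nat.lt_or_ge k l with hkl' | hkl'
        · exact lt_trans (ih hk (by omega) (by omega) hkl') (step l (by omega) (by omega) hl)
        · have : k = l := by omega
          subst this
          exact step k (by omega) hk hl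
    intro k l hk hl hkm hlm
    constructor
    · intro hlt
      by_contra hc
      rcases Nat.lt_or_ge l k with h' | h'
      · exact absurd (chain l k hl hk hkm h') (asymm hlt)
      · have : k = l := by omega
        subst this
        exact absurd hlt (lt_irrefl _)
    · exact fun hkl => chain k l hk hl hlm hkl
  · intro H
    constructor
    · intro k l hk hl hkm hlm
      exact H k l hk hl (by omega) (by omega)
    · intro k l hk hl hkm hlm
      have key := H ((m - s) + k) ((m - s) + l) (by omega) (by omega) (by omega) (by omega)
      rw [perm_mk_congr σ (a := i + (m - s + k)) (b := i + (m - s) + k) (by omega) hk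
          (by omega),
        perm_mk_congr σ (a := i + (m - s + l)) (b := i + (m - s) + l) (by omega) hl
          (by omega)] at key
      rw [key]
      omega

lemma occursConsec_overlap {m s n i : ℕ} (hs1 : 1 ≤ s) (hs2 : s + 1 ≤ m)
    (h2 : i + (m - s) + m ≤ n) (σ : Equiv.Perm (Fin n)) :
    (OccursConsec (Equiv.refl (Fin m)) σ i ∧ OccursConsec (Equiv.refl (Fin m)) σ (i + (m - s)))
      ↔ OccursConsec (Equiv.refl (Fin (2 * m - s))) σ i := by
  rw [occursConsec_iff σ (show i + m ≤ n by omega),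
      occursConsec_iff σ (show i + (m - s) + m ≤ n by omega),
      occursConsec_iff σ (show i + (2 * m - s) ≤ n by omega)]
  exact inc_overlap hs1 hs2 h2 σ

/-- Lemma: first and second moments of the indicators of increasing blocks of `m`
consecutive positions of a Mallows(q) permutation of `[n]`. -/
theorem stmt15 (q : ℝ) (hq : 0 < q) (n m : ℕ) (hm : 1 ≤ m) (hn : 2 * m ≤ n) :
    (∀ i : ℕ, i + m ≤ n →
      mallowsProb q {πn : Equiv.Perm (Fin n) | OccursConsec (Equiv.refl (Fin m)) πn i}
        = 1 / invPoly m q)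
    ∧ (∀ i i' : ℕ, i + m ≤ n → i' + m ≤ n → (i + m ≤ i' ∨ i' + m ≤ i) →
      mallowsProb q {πn : Equiv.Perm (Fin n) |
          OccursConsec (Equiv.refl (Fin m)) πn i ∧ OccursConsec (Equiv.refl (Fin m)) πn i'}
        = 1 / (invPoly m q) ^ 2)
    ∧ (∀ s i i' : ℕ, 1 ≤ s → s ≤ m - 1 → i + m ≤ n → i' + m ≤ n →
        (i' = i + (m - s) ∨ i = i' + (m - s)) →
      mallowsProb q {πn : Equiv.Perm (Fin n) |
          OccursConsec (Equiv.refl (Fin m)) πn i ∧ OccursConsec (Equiv.refl (Fin m)) πn i'}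
        = 1 / invPoly (2 * m - s) q) := by
  refine ⟨?_, ?_, ?_⟩
  · intro i hi
    exact mallows_inc q hq hi
  · intro i i' hi hi' hsep
    exact mallows_inc2 q hq hi hi' hsep
  · intro s i i' hs1 hs2 hi hi' hii
    have hs2' : s + 1 ≤ m := by omega
    rcases hii with hii | hii
    · subst hii
      have hset : {πn : Equiv.Perm (Fin n) | OccursConsec (Equiv.refl (Fin m)) πn i ∧
            OccursConsec (Equiv.refl (Fin m)) πn (i + (m - s))}
          = {πn : Equiv.Perm (Fin n) | OccursConsec (Equiv.refl (Fin (2 * m - s))) πn i} :=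
        Set.ext fun πn => occursConsec_overlap hs1 hs2' hi' πn
      rw [hset]
      exact mallows_inc q hq (show i + (2 * m - s) ≤ n by omega)
    · subst hii
      have hset : {πn : Equiv.Perm (Fin n) | OccursConsec (Equiv.refl (Fin m)) πn (i' + (m - s)) ∧
            OccursConsec (Equiv.refl (Fin m)) πn i'}
          = {πn : Equiv.Perm (Fin n) | OccursConsec (Equiv.refl (Fin (2 * m - s))) πn i'} :=
        Set.ext fun πn => (and_comm.trans (occursConsec_overlap hs1 hs2' hi πn))
      rw [hset]
      exact mallows_inc q hq (show i' + (2 * m - s) ≤ n by omega)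

end
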